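/- Let p be a prime, k ≥ 1, G a group, and M an abelian group equipped with an action of G by automorphisms (a G-module) such that M is cofinitely generated over ℤ_p. Write M^G for the subgroup of G-invariants and M/M^G for the quotient G-module. Assume that H^1(G, ℤ/p^kℤ) (cohomology with trivial action) is finite of order p^{h_k(G)}, and that the p^k-torsion subgroups of H^1(G, M) and of (M/M^G)^G are finite. Then h_k(G)·r_p(p^{k−1}·M^G) − r_p^k((M/M^G)^G) ≤ r_p^k(H^1(G, M)); equivalently |H^1(G, ℤ/p^kℤ)|^{r_p(p^{k−1}M^G)} ≤ |H^1(G,M)[p^k]| · |((M/M^G)^G)[p^k]|. -/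

import Mathlib

/-- An abelian group is *cofinitely generated over `ℤ_p`* if it is `p`-primary torsion
and its `p`-torsion subgroup is finite. -/
def CofinitelyGenerated (p : ℕ) (N : Type*) [AddCommGroup N] : Prop :=
  (∀ x : N, ∃ n : ℕ, ((p : ℤ) ^ n) • x = 0) ∧
    Finite (Submodule.torsionBy ℤ N (p : ℤ))

/-- The `p`-rank `r_p(N)`: the exponent `r` with `|N[p]| = p^r`. -/
noncomputable def rp (p : ℕ) (N : Type*) [AddCommGroup N] : ℕ :=
  (Nat.card (Submodule.torsionBy ℤ N (p : ℤ))).factorization p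

/-- The image `p^m · M` of multiplication by `p^m` on `M`. -/
noncomputable def pPowMul (p m : ℕ) (M : Type*) [AddCommGroup M] : Submodule ℤ M :=
  LinearMap.range (((p : ℤ) ^ m) • (LinearMap.id : M →ₗ[ℤ] M))

section GroupCohomology

variable {G : Type*} [Group G] {M : Type*} [AddCommGroup M]

/-- The subgroup of `G`-invariants of a `G`-module `M` (action given by `ρ`). -/
def invariants (ρ : G →* Multiplicative (AddAut M)) : AddSubgroup M where
  carrier := {x | ∀ g : G, (ρ g).toAdd x = x}
  zero_mem' := by intro g; simp
  add_mem' := by intro a b ha hb g; simp [map_add, ha g, hb g]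
  neg_mem' := by intro a ha g; simp [ha g]

/-- The group of 1-cocycles of `G` with values in the `G`-module `M`. -/
def oneCocycles (ρ : G →* Multiplicative (AddAut M)) : AddSubgroup (G → M) where
  carrier := {f | ∀ g h : G, f (g * h) = f g + (ρ g).toAdd (f h)}
  zero_mem' := by intro g h; simp
  add_mem' := by
    intro a b ha hb g h
    simp only [Pi.add_apply, ha g h, hb g h, map_add]
    abel
  neg_mem' := by
    intro a ha g h
    simp only [Pi.neg_apply, ha g h, map_neg]
    abel

/-- The group of 1-coboundaries, as a subgroup of the 1-cocycles. -/
def oneCoboundaries (ρ : G →* Multiplicative (AddAut M)) : AddSubgroup (oneCocycles ρ) where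
  carrier := {f | ∃ m : M, ∀ g : G, (f : G → M) g = (ρ g).toAdd m - m}
  zero_mem' := ⟨0, by intro g; simp⟩
  add_mem' := by
    rintro a b ⟨m, hm⟩ ⟨m', hm'⟩
    refine ⟨m + m', fun g => ?_⟩
    have : ((a + b : oneCocycles ρ) : G → M) g = (a : G → M) g + (b : G → M) g := rfl
    rw [this, hm g, hm' g, map_add]
    abel
  neg_mem' := by
    rintro a ⟨m, hm⟩
    refine ⟨-m, fun g => ?_⟩
    have : ((-a : oneCocycles ρ) : G → M) g = -((a : G → M) g) := rfl
    rw [this, hm g, map_neg]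
    abel

/-- The first group cohomology `H¹(G, M)` of the `G`-module `M`. -/
abbrev H1 (ρ : G →* Multiplicative (AddAut M)) := oneCocycles ρ ⧸ oneCoboundaries ρ

end GroupCohomology


private lemma torsion_finite_of_injective {N M : Type*} [AddCommGroup N] [AddCommGroup M]
    (f : N →+ M) (hf : Function.Injective f) (q : ℤ)
    (h : Finite (Submodule.torsionBy ℤ M q)) :
    Finite (Submodule.torsionBy ℤ N q) := by
  refine Finite.of_injective (fun x : Submodule.torsionBy ℤ N q =>
    (⟨f x, ?_⟩ : Submodule.torsionBy ℤ M q)) ?_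
  · rw [Submodule.mem_torsionBy_iff, ← map_zsmul f]
    rw [(Submodule.mem_torsionBy_iff _ _).mp x.2, map_zero]
  · intro a b hab
    exact Subtype.ext (hf (congrArg Subtype.val hab))

private lemma natmod_zsmul {N : Type*} [AddCommGroup N] (n m : ℕ) (x : N)
    (h : (n : ℤ) • x = 0) : ((m % n : ℕ) : ℤ) • x = (m : ℤ) • x := by
  conv_rhs => rw [← Nat.div_add_mod m n]
  push_cast
  rw [add_smul, mul_comm, mul_smul, h, smul_zero, zero_add]

private lemma exists_iota (p k : ℕ) (hp : p.Prime) (hk : 1 ≤ k) (N : Type*) [AddCommGroup N]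
    (hfin : Finite (Submodule.torsionBy ℤ N (p : ℤ))) :
    ∃ ι : (Fin (rp p (pPowMul p (k - 1) N)) → ZMod (p ^ k)) →+ N,
      Function.Injective ι ∧ ∀ c, ((p : ℤ) ^ k) • ι c = 0 := by
  classical
  obtain ⟨p', rfl⟩ : ∃ p', p = p' + 1 := ⟨p - 1, by have := hp.two_le; omega⟩
  set p : ℕ := p' + 1 with hpdef
  haveI : Fact p.Prime := ⟨hp⟩
  haveI : NeZero (p ^ k) := ⟨pow_ne_zero k hp.ne_zero⟩
  set P : Submodule ℤ N := pPowMul p (k - 1) N with hPdef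
  set B : Submodule ℤ ↥P := Submodule.torsionBy ℤ ↥P (p : ℤ) with hBdef
  haveI hBfin : Finite ↥B :=
    torsion_finite_of_injective P.subtype.toAddMonoidHom P.injective_subtype _ hfin
  have hBtor : ∀ x : ↥B, p • x = 0 := by
    intro x
    have h1 : (p : ℤ) • (x : ↥P) = 0 := (Submodule.mem_torsionBy_iff _ _).mp x.2
    have : (p : ℤ) • x = 0 := by
      apply Subtype.ext
      show (p : ℤ) • (x : ↥P) = 0
      exact h1
    rwa [natCast_zsmul] at this
  letI : Module (ZMod p) ↥B := AddCommGroup.zmodModule hBtor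
  haveI : Module.Free (ZMod p) ↥B := Module.Free.of_divisionRing (ZMod p) ↥B
  let ι₀ := Module.Free.ChooseBasisIndex (ZMod p) ↥B
  let b : Module.Basis ι₀ (ZMod p) ↥B := Module.Free.chooseBasis (ZMod p) ↥B
  have hcard : Nat.card ↥B = p ^ Fintype.card ι₀ := by
    rw [Nat.card_congr b.equivFun.toEquiv, Nat.card_pi]
    simp [Nat.card_zmod]
  have hr : rp p ↥P = Fintype.card ι₀ := by
    rw [rp, ← hBdef, hcard, hp.factorization_pow, Finsupp.single_eq_same]
  -- reindex basis by Fin r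
  set r := rp p ↥P with hrdef
  let e : ι₀ ≃ Fin r := Fintype.equivFinOfCardEq hr.symm
  let bb : Module.Basis (Fin r) (ZMod p) ↥B := b.reindex e
  -- choose lifts
  have hlift : ∀ i : Fin r, ∃ a : N, ((p : ℤ) ^ (k - 1)) • a = ((bb i : ↥P) : N) := by
    intro i
    obtain ⟨y, hy⟩ := (bb i : ↥P).2
    rw [LinearMap.smul_apply, LinearMap.id_apply] at hy
    exact ⟨y, hy⟩
  choose a ha using hlift
  have hator : ∀ i, ((p : ℤ) ^ k) • a i = 0 := by
    intro i
    have hk' : k = (k - 1) + 1 := (Nat.succ_pred_eq_of_pos hk).symm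
    rw [hk', pow_succ']
    rw [mul_smul, ha i]
    have h1 : (p : ℤ) • (bb i : ↥P) = 0 := (Submodule.mem_torsionBy_iff _ _).mp (bb i).2
    calc (p : ℤ) • ((bb i : ↥P) : N) = (((p : ℤ) • (bb i : ↥P) : ↥P) : N) := rfl
      _ = 0 := by rw [h1]; rfl
  -- the map
  have hadd : ∀ c c' : Fin r → ZMod (p ^ k),
      (∑ i, (((c + c') i).val : ℤ) • a i) =
        (∑ i, ((c i).val : ℤ) • a i) + ∑ i, ((c' i).val : ℤ) • a i := by
    intro c c'
    rw [← Finset.sum_add_distrib]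
    refine Finset.sum_congr rfl fun i _ => ?_
    have hv : ((c + c') i).val = ((c i).val + (c' i).val) % (p ^ k) := ZMod.val_add _ _
    rw [hv, natmod_zsmul _ _ _ (by exact_mod_cast hator i)]
    push_cast
    rw [add_smul]
  refine ⟨AddMonoidHom.mk' (fun c => ∑ i, ((c i).val : ℤ) • a i) hadd, ?_, ?_⟩
  · -- injectivity
    rw [injective_iff_map_eq_zero]
    intro c hc
    simp only [AddMonoidHom.mk'_apply] at hc
    have key : ∀ j : ℕ, j ≤ k → ∀ i, ((p : ℤ) ^ j) ∣ ((c i).val : ℤ) := by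
      intro j
      induction j with
      | zero => intro _ i; simp
      | succ j IH =>
        intro hjk i
        have hj : j ≤ k - 1 := by omega
        choose d hd using fun i => IH (by omega) i
        have h0 := congrArg (fun x => ((p : ℤ) ^ (k - 1 - j)) • x) hc
        simp only [Finset.smul_sum, smul_smul, smul_zero] at h0
        have hsum : (∑ i, d i • ((bb i : ↥P) : N)) = 0 := by
          rw [← h0]
          refine Finset.sum_congr rfl fun i _ => ?_
          rw [hd i, ← mul_assoc, ← pow_add, Nat.sub_add_cancel hj,
            mul_comm ((p : ℤ) ^ (k - 1)) (d i), mul_smul, ha i]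
        set L : ↥B →ₗ[ℤ] N := P.subtype ∘ₗ B.subtype with hLdef
        have hLinj : Function.Injective L := P.injective_subtype.comp B.injective_subtype
        have hL0 : L (∑ i, d i • bb i) = L 0 := by
          rw [map_zero, map_sum]
          simp only [map_zsmul]
          exact hsum
        have hSB : (∑ i, d i • bb i) = 0 := hLinj hL0
        have hZ : ((d i : ZMod p)) = 0 := by
          refine Fintype.linearIndependent_iff.mp bb.linearIndependent
            (fun i => ((d i : ZMod p))) ?_ i
          rw [← hSB]
          exact Finset.sum_congr rfl fun i _ => Int.cast_smul_eq_zsmul _ _ _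
        obtain ⟨t, ht⟩ := (ZMod.intCast_zmod_eq_zero_iff_dvd _ _).mp hZ
        exact ⟨t, by rw [hd i, ht]; ring⟩
    have := key k le_rfl
    funext i
    have h1 : (p ^ k : ℕ) ∣ (c i).val := by
      have := this i
      exact_mod_cast this
    have h2 : (c i).val = 0 := Nat.eq_zero_of_dvd_of_lt h1 (ZMod.val_lt _)
    simp only [Pi.zero_apply]
    exact (ZMod.val_eq_zero _).mp h2
  · intro c
    simp only [AddMonoidHom.mk'_apply]
    rw [Finset.smul_sum]
    refine Finset.sum_eq_zero fun i _ => ?_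
    rw [smul_comm, hator, smul_zero]

theorem card_H1_pk_torsion_lower_bound
    (p k : ℕ) (hp : p.Prime) (hk : 1 ≤ k)
    (G : Type*) [Group G]
    (M : Type*) [AddCommGroup M] (ρM : G →* Multiplicative (AddAut M))
    (hM : CofinitelyGenerated p M)
    -- the quotient `G`-module `Q = M / M^G`
    (Q : Type*) [AddCommGroup Q] (ρQ : G →* Multiplicative (AddAut Q))
    (π : M →+ Q) (hπsurj : Function.Surjective π)
    (hπequiv : ∀ (g : G) (x : M), π ((ρM g).toAdd x) = (ρQ g).toAdd (π x))
    (hπker : π.ker = invariants ρM)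
    -- finiteness hypotheses
    (hfin : Finite (H1 (1 : G →* Multiplicative (AddAut (ZMod (p ^ k))))))
    (hfin1 : Finite (Submodule.torsionBy ℤ (H1 ρM) ((p : ℤ) ^ k)))
    (hfin2 : Finite (Submodule.torsionBy ℤ (invariants ρQ) ((p : ℤ) ^ k))) :
    Nat.card (H1 (1 : G →* Multiplicative (AddAut (ZMod (p ^ k))))) ^
        (rp p (pPowMul p (k - 1) (invariants ρM))) ≤
      Nat.card (Submodule.torsionBy ℤ (H1 ρM) ((p : ℤ) ^ k)) *
        Nat.card (Submodule.torsionBy ℤ (invariants ρQ) ((p : ℤ) ^ k)) := by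
  classical
  haveI : NeZero (p ^ k) := ⟨pow_ne_zero k hp.ne_zero⟩
  haveI := hfin1
  haveI := hfin2
  set r := rp p ↥(pPowMul p (k - 1) ↥(invariants ρM)) with hrdef
  obtain ⟨ι, hιinj, hιtor⟩ := exists_iota p k hp hk ↥(invariants ρM)
    (torsion_finite_of_injective (invariants ρM).subtype Subtype.coe_injective _ hM.2)
  -- the trivial-action cohomology is just the cocycles
  set H := oneCocycles (1 : G →* Multiplicative (AddAut (ZMod (p ^ k)))) with hHdef
  have hcob : oneCoboundaries (1 : G →* Multiplicative (AddAut (ZMod (p ^ k)))) = ⊥ := by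
    ext f
    simp only [AddSubgroup.mem_bot]
    constructor
    · rintro ⟨m, hm⟩
      apply Subtype.ext
      funext g
      simpa using hm g
    · rintro rfl
      exact zero_mem _
  have e1 : H1 (1 : G →* Multiplicative (AddAut (ZMod (p ^ k)))) ≃+ ↥H :=
    (QuotientAddGroup.quotientAddEquivOfEq hcob).trans QuotientAddGroup.quotientBot
  haveI : Finite ↥H := Finite.of_equiv _ e1.toEquiv
  have hcardH : Nat.card (H1 (1 : G →* Multiplicative (AddAut (ZMod (p ^ k))))) = Nat.card ↥H :=
    Nat.card_congr e1.toEquiv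
  have hcardD : Nat.card (Fin r → ↥H) = Nat.card ↥H ^ r := by
    rw [Nat.card_pi, Finset.prod_const, Finset.card_univ, Fintype.card_fin]
  -- the cocycles c_f for f : Fin r → H
  set cf : (Fin r → ↥H) → G → M := fun f g =>
    ((ι (fun i => ((f i : G → ZMod (p ^ k)) g)) : ↥(invariants ρM)) : M) with hcfdef
  have hcf_inv : ∀ f g g', (ρM g').toAdd (cf f g) = cf f g := fun f g g' =>
    (ι (fun i => ((f i : G → ZMod (p ^ k)) g))).2 g'
  have hcf_tor : ∀ f g, ((p : ℤ) ^ k) • cf f g = 0 := by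
    intro f g
    show ((p : ℤ) ^ k) • ((ι (fun i => ((f i : G → ZMod (p ^ k)) g)) : ↥(invariants ρM)) : M) = 0
    have h2 := congrArg Subtype.val (hιtor (fun i => ((f i : G → ZMod (p ^ k)) g)))
    simpa using h2
  have hcf_add : ∀ f f' g, cf (f + f') g = cf f g + cf f' g := by
    intro f f' g
    show ((ι ((fun i => ((f i : G → ZMod (p ^ k)) g)) +
        (fun i => ((f' i : G → ZMod (p ^ k)) g))) : ↥(invariants ρM)) : M) = _
    rw [map_add ι]
    rfl
  have hcf_cocycle : ∀ f, cf f ∈ oneCocycles ρM := by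
    intro f g h
    show cf f (g * h) = cf f g + (ρM g).toAdd (cf f h)
    rw [hcf_inv f h g]
    have hv : (fun i => ((f i : G → ZMod (p ^ k)) (g * h)))
        = (fun i => ((f i : G → ZMod (p ^ k)) g)) + (fun i => ((f i : G → ZMod (p ^ k)) h)) := by
      funext i
      simpa using (f i).2 g h
    show ((ι _ : ↥(invariants ρM)) : M) = _
    rw [hv, map_add ι]
    rfl
  set cfc : (Fin r → ↥H) → ↥(oneCocycles ρM) := fun f => ⟨cf f, hcf_cocycle f⟩ with hcfcdef
  have hcfc_tor : ∀ f, ((p : ℤ) ^ k) • cfc f = 0 := by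
    intro f
    apply Subtype.ext
    funext g
    show ((p : ℤ) ^ k) • cf f g = 0
    exact hcf_tor f g
  set Φ : (Fin r → ↥H) →+ Submodule.torsionBy ℤ (H1 ρM) ((p : ℤ) ^ k) :=
    AddMonoidHom.mk' (fun f => ⟨QuotientAddGroup.mk (cfc f), by
      rw [Submodule.mem_torsionBy_iff, ← QuotientAddGroup.mk_zsmul, hcfc_tor]
      rfl⟩) (fun f f' => by
      apply Subtype.ext
      show (QuotientAddGroup.mk (cfc (f + f')) : H1 ρM) = _
      rw [show (cfc (f + f')) = cfc f + cfc f' from Subtype.ext (funext fun g => hcf_add f f' g),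
        QuotientAddGroup.mk_add]
      rfl) with hΦdef
  -- analysis of the kernel of Φ
  have hker : ∀ f, Φ f = 0 → ∃ m : M, ∀ g, cf f g = (ρM g).toAdd m - m := by
    intro f hf
    have h1 : (QuotientAddGroup.mk (cfc f) : H1 ρM) = 0 := congrArg Subtype.val hf
    have h2 : cfc f ∈ oneCoboundaries ρM := (QuotientAddGroup.eq_zero_iff _).mp h1
    obtain ⟨m, hm⟩ := h2
    exact ⟨m, fun g => hm g⟩
  choose mf hmf using hker
  have hπ0 : ∀ x : M, x ∈ invariants ρM → π x = 0 := by
    intro x hx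
    have hx' : x ∈ π.ker := by rw [hπker]; exact hx
    exact AddMonoidHom.mem_ker.mp hx'
  have hcfπ : ∀ f g, π (cf f g) = 0 := fun f g =>
    hπ0 _ (ι (fun i => ((f i : G → ZMod (p ^ k)) g))).2
  have hρm : ∀ f (hf : Φ f = 0) (g : G), (ρM g).toAdd (mf f hf) = cf f g + mf f hf := by
    intro f hf g
    rw [hmf f hf g]
    abel
  have hq_inv : ∀ f hf, π (mf f hf) ∈ invariants ρQ := by
    intro f hf g
    rw [← hπequiv g (mf f hf), hρm f hf g, map_add, hcfπ, zero_add]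
  have hq_tor : ∀ f hf, ((p : ℤ) ^ k) • π (mf f hf) = 0 := by
    intro f hf
    rw [← map_zsmul π]
    apply hπ0
    intro g
    rw [map_zsmul (ρM g).toAdd, hρm f hf g, smul_add, hcf_tor, zero_add]
  -- the injection from ker Φ into the torsion of the invariants of Q
  have hΨ : ∃ Ψ : ↥Φ.ker → ↥(Submodule.torsionBy ℤ ↥(invariants ρQ) ((p : ℤ) ^ k)),
      Function.Injective Ψ := by
    refine ⟨fun f => ⟨⟨π (mf f.1 (AddMonoidHom.mem_ker.mp f.2)),
      hq_inv _ _⟩, by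
        rw [Submodule.mem_torsionBy_iff]
        apply Subtype.ext
        show ((p : ℤ) ^ k) • π (mf _ _) = 0
        exact hq_tor _ _⟩, ?_⟩
    intro f1 f2 h
    have hf1 := AddMonoidHom.mem_ker.mp f1.2
    have hf2 := AddMonoidHom.mem_ker.mp f2.2
    have hπm : π (mf f1.1 hf1) = π (mf f2.1 hf2) :=
      congrArg Subtype.val (congrArg Subtype.val h)
    have hmm : ∀ g, (ρM g).toAdd (mf f1.1 hf1 - mf f2.1 hf2) = mf f1.1 hf1 - mf f2.1 hf2 := by
      have hmem : (mf f1.1 hf1 - mf f2.1 hf2) ∈ invariants ρM := by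
        rw [← hπker]
        apply AddMonoidHom.mem_ker.mpr
        rw [map_sub, hπm, sub_self]
      exact hmem
    have hcfeq : ∀ g, cf f1.1 g = cf f2.1 g := by
      intro g
      have e3 := hmm g
      rw [map_sub] at e3
      rw [hmf f1.1 hf1 g, hmf f2.1 hf2 g]
      have h4 : ((ρM g).toAdd (mf f1.1 hf1) - mf f1.1 hf1) -
          ((ρM g).toAdd (mf f2.1 hf2) - mf f2.1 hf2) = 0 := by
        calc ((ρM g).toAdd (mf f1.1 hf1) - mf f1.1 hf1) - ((ρM g).toAdd (mf f2.1 hf2) - mf f2.1 hf2)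
            = ((ρM g).toAdd (mf f1.1 hf1) - (ρM g).toAdd (mf f2.1 hf2)) -
              (mf f1.1 hf1 - mf f2.1 hf2) := by abel
          _ = (mf f1.1 hf1 - mf f2.1 hf2) - (mf f1.1 hf1 - mf f2.1 hf2) := by rw [e3]
          _ = 0 := sub_self _
      exact sub_eq_zero.mp h4
    apply Subtype.ext
    funext i
    apply Subtype.ext
    funext g
    have h5 : ι (fun i => ((f1.1 i : G → ZMod (p ^ k)) g))
        = ι (fun i => ((f2.1 i : G → ZMod (p ^ k)) g)) :=
      Subtype.coe_injective (hcfeq g)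
    exact congrFun (hιinj h5) i
  obtain ⟨Ψ, hΨinj⟩ := hΨ
  have hTot : Nat.card (Fin r → ↥H) =
      Nat.card ((Fin r → ↥H) ⧸ Φ.ker) * Nat.card Φ.ker :=
    AddSubgroup.card_eq_card_quotient_mul_card_addSubgroup Φ.ker
  have h1 : Nat.card ((Fin r → ↥H) ⧸ Φ.ker)
      ≤ Nat.card (Submodule.torsionBy ℤ (H1 ρM) ((p : ℤ) ^ k)) := by
    rw [Nat.card_congr (QuotientAddGroup.quotientKerEquivRange Φ).toEquiv]
    exact Nat.card_le_card_of_injective _ Subtype.val_injective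
  have h2 : Nat.card ↥Φ.ker
      ≤ Nat.card (Submodule.torsionBy ℤ ↥(invariants ρQ) ((p : ℤ) ^ k)) :=
    Nat.card_le_card_of_injective Ψ hΨinj
  calc Nat.card (H1 (1 : G →* Multiplicative (AddAut (ZMod (p ^ k))))) ^ r
      = Nat.card ↥H ^ r := by rw [hcardH]
    _ = Nat.card (Fin r → ↥H) := hcardD.symm
    _ = Nat.card ((Fin r → ↥H) ⧸ Φ.ker) * Nat.card Φ.ker := hTot
    _ ≤ _ := mul_le_mul' h1 h2
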